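/- arXiv:1601.05176 — 4 statements merged into one kernel-verified Lean document; each statement's English description precedes it below -/
import Mathlib

section
/- Trace concatenation is left-cancellative: for all Mazurkiewicz traces u, v, w over a dependency alphabet, if uv = uw then v = w. -/
namespace MazTrace

variable {A : Type*}

/-- Smallest equivalence on words over `A` generated by commuting two adjacent
independent letters (`a I b` iff `¬ D a b`). -/
inductive TraceRel (D : A → A → Prop) : List A → List A → Prop
  | refl (u : List A) : TraceRel D u u
  | swap (u v : List A) (a b : A) (h : ¬ D a b) :
      TraceRel D (u ++ a :: b :: v) (u ++ b :: a :: v)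
  | symm {u v : List A} : TraceRel D u v → TraceRel D v u
  | trans {u v w : List A} : TraceRel D u v → TraceRel D v w → TraceRel D u w

theorem TraceRel.append_right {D : A → A → Prop} {u u' : List A} (w : List A)
    (h : TraceRel D u u') : TraceRel D (u ++ w) (u' ++ w) := by
  induction h with
  | refl u => exact .refl _
  | swap x y a b hab =>
      simpa [List.append_assoc] using TraceRel.swap (D := D) x (y ++ w) a b hab
  | symm _ ih => exact ih.symm
  | trans _ _ ih1 ih2 => exact ih1.trans ih2

theorem TraceRel.append_left {D : A → A → Prop} {v v' : List A} (w : List A)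
    (h : TraceRel D v v') : TraceRel D (w ++ v) (w ++ v') := by
  induction h with
  | refl u => exact .refl _
  | swap x y a b hab =>
      simpa [List.append_assoc] using TraceRel.swap (D := D) (w ++ x) y a b hab
  | symm _ ih => exact ih.symm
  | trans _ _ ih1 ih2 => exact ih1.trans ih2

def traceSetoid (D : A → A → Prop) : Setoid (List A) :=
  ⟨TraceRel D, ⟨TraceRel.refl, TraceRel.symm, TraceRel.trans⟩⟩

/-- A Mazurkiewicz trace: an equivalence class of words. -/
def Trace (D : A → A → Prop) : Type _ := Quotient (traceSetoid D)

namespace Trace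

variable {D : A → A → Prop}

/-- The trace of a word. -/
def mk (D : A → A → Prop) (u : List A) : Trace D := Quotient.mk (traceSetoid D) u

/-- The empty trace. -/
instance : One (Trace D) := ⟨mk D []⟩

/-- Concatenation of traces, induced by concatenation of words. -/
instance : Mul (Trace D) :=
  ⟨fun s t => Quotient.liftOn₂ s t (fun u v => mk D (u ++ v))
    (fun _ _ _ _ hu hv =>
      Quotient.sound ((hu.append_right _).trans (TraceRel.append_left _ hv)))⟩

instance : Nonempty (Trace D) := ⟨1⟩

/-- Length of a trace: the length of any of its linearizations. -/
def length (t : Trace D) : ℕ :=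
  Quotient.liftOn t List.length (by
    intro u v h
    induction h with
    | refl u => rfl
    | swap x y a b hab => simp
    | symm _ ih => exact ih.symm
    | trans _ _ ih1 ih2 => exact ih1.trans ih2)

/-- The set of letters of a trace. -/
def alph (t : Trace D) : Set A :=
  Quotient.liftOn t (fun u => {a | a ∈ u}) (by
    intro u v h
    induction h with
    | refl u => rfl
    | swap x y a b hab => ext c; simp [List.mem_append]; tauto
    | symm _ ih => exact ih.symm
    | trans _ _ ih1 ih2 => exact ih1.trans ih2)

/-- Prefix order on traces: `s ⊑ t` iff `s * w = t` for some trace `w`. -/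
def Prefix (s t : Trace D) : Prop := ∃ w, s * w = t

/-- `t I B` : every letter of the trace `t` is independent of every element of `B`. -/
def IndepSet (t : Trace D) (B : Set A) : Prop := ∀ a ∈ t.alph, ∀ b ∈ B, ¬ D a b

/-- `s I t` : every letter of `s` is independent of every letter of `t`. -/
def Indep (s t : Trace D) : Prop := ∀ a ∈ s.alph, ∀ b ∈ t.alph, ¬ D a b

/-- `a I t` : the letter `a` is independent of every letter of the trace `t`. -/
def IndepLetter (a : A) (t : Trace D) : Prop := ∀ c ∈ t.alph, ¬ D a c

/-- `w` is the `B`-view of `t`: the shortest prefix of `t` such that `t = w·v`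
for some trace `v` with `v I B`. -/
def IsView (B : Set A) (t w : Trace D) : Prop :=
  (∃ v, w * v = t ∧ v.IndepSet B) ∧
  ∀ w' v', w' * v' = t → v'.IndepSet B → w.length ≤ w'.length

/-- The `B`-view of a trace. -/
noncomputable def view (B : Set A) (t : Trace D) : Trace D :=
  Classical.epsilon (IsView B t)

/-- A trace is `B`-prime if every linearization of it ends with a letter of `B`. -/
def IsBPrime (B : Set A) (t : Trace D) : Prop :=
  ∀ u : List A, mk D u = t → ∀ a : A, u.getLast? = some a → a ∈ B

/-- A trace is prime if all its linearizations have the same last letter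
(the empty trace counts as prime). -/
def IsPrime (t : Trace D) : Prop :=
  ∀ u v : List A, mk D u = t → mk D v = t → u.getLast? = v.getLast?

end Trace

section Cancel

open Classical

variable {D : A → A → Prop}

/-- Projection of a word onto the pair of letters `{a, b}`. -/
noncomputable def proj (a b : A) (u : List A) : List A :=
  u.filter (fun c => decide (c = a ∨ c = b))

theorem proj_eq_of_rel (hrefl : ∀ a, D a a) (hsymm : ∀ a b, D a b → D b a)
    {u v : List A} (h : TraceRel D u v) (a b : A) (hab : D a b) :
    proj a b u = proj a b v := by
  induction h with
  | refl u => rfl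
  | swap x y c d hcd =>
      simp only [proj, List.filter_append]
      congr 1
      have hnot : ¬ ((c = a ∨ c = b) ∧ (d = a ∨ d = b)) := by
        rintro ⟨hc | hc, hd | hd⟩ <;> subst hc <;> subst hd <;>
          exact hcd (by first | exact hrefl _ | exact hab | exact hsymm _ _ hab)
      by_cases hc : c = a ∨ c = b <;> by_cases hd : d = a ∨ d = b <;>
        simp [List.filter_cons, hc, hd] at hnot ⊢
  | symm _ ih => exact ih.symm
  | trans _ _ ih1 ih2 => exact ih1.trans ih2

theorem first_occ {a : A} : ∀ {v : List A}, a ∈ v →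
    ∃ p q : List A, v = p ++ a :: q ∧ a ∉ p := by
  intro v hv
  induction v with
  | nil => simp at hv
  | cons c v ih =>
      by_cases hca : c = a
      · exact ⟨[], v, by simp [hca], by simp⟩
      · have : a ∈ v := by
          rcases List.mem_cons.1 hv with h | h
          · exact absurd h.symm hca
          · exact h
        obtain ⟨p, q, hpq, hp⟩ := ih this
        refine ⟨c :: p, q, by simp [hpq], ?_⟩
        intro hmem
        rcases List.mem_cons.1 hmem with h | h
        · exact hca h.symm
        · exact hp h

theorem rel_bubble (hsymm : ∀ a b, D a b → D b a) (a : A) :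
    ∀ p q : List A, (∀ c ∈ p, ¬ D a c) →
      TraceRel D (p ++ a :: q) (a :: (p ++ q)) := by
  intro p
  induction p with
  | nil => intro q _; exact .refl _
  | cons c p ih =>
      intro q hp
      have h1 : TraceRel D (c :: (p ++ a :: q)) (c :: (a :: (p ++ q))) :=
        TraceRel.append_left [c] (ih q fun x hx => hp x (List.mem_cons_of_mem _ hx))
      have h2 : TraceRel D ([] ++ c :: a :: (p ++ q)) ([] ++ a :: c :: (p ++ q)) :=
        TraceRel.swap [] (p ++ q) c a
          (fun hd => hp c (List.mem_cons_self) (hsymm _ _ hd))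
      simpa using h1.trans (by simpa using h2)

theorem rel_of_proj_eq (hrefl : ∀ a, D a a) (hsymm : ∀ a b, D a b → D b a) :
    ∀ u v : List A, (∀ a b, D a b → proj a b u = proj a b v) →
      TraceRel D u v := by
  intro u
  induction u with
  | nil =>
      intro v h
      cases v with
      | nil => exact .refl _
      | cons c v' =>
          exfalso
          have := h c c (hrefl c)
          simp [proj, List.filter_cons] at this
  | cons a u' ih =>
      intro v h
      have haa := h a a (hrefl a)
      have hmem : a ∈ v := by
        have : a ∈ proj a a v := by
          rw [← haa]; simp [proj, List.filter_cons]
        exact List.mem_of_mem_filter this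
      obtain ⟨p, q, hv, hap⟩ := first_occ hmem
      have hindep : ∀ c ∈ p, ¬ D a c := by
        intro c hc hdac
        have hproj := h a c hdac
        have hcf : c ∈ p.filter (fun x => decide (x = a) || decide (x = c)) :=
          List.mem_filter.2 ⟨hc, by simp⟩
        obtain ⟨e, es, hfp⟩ :
            ∃ e es, p.filter (fun x => decide (x = a) || decide (x = c)) = e :: es := by
          cases hpf : p.filter (fun x => decide (x = a) || decide (x = c)) with
          | nil => rw [hpf] at hcf; simp at hcf
          | cons e es => exact ⟨e, es, rfl⟩
        have hep : e ∈ p := by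
          have : e ∈ p.filter (fun x => decide (x = a) || decide (x = c)) := by
            rw [hfp]; exact List.mem_cons_self
          exact List.mem_of_mem_filter this
        have key : a :: (u'.filter (fun x => decide (x = a) || decide (x = c))) =
            (p.filter (fun x => decide (x = a) || decide (x = c))) ++
              a :: (q.filter (fun x => decide (x = a) || decide (x = c))) := by
          have := hproj
          rw [hv] at this
          simpa [proj, List.filter_append, List.filter_cons] using this
        rw [hfp, List.cons_append] at key
        have hea : a = e := by simpa using congrArg List.head? key
        exact hap (by rw [hea]; exact hep)
      have hbub : TraceRel D v (a :: (p ++ q)) := by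
        rw [hv]; exact rel_bubble hsymm a p q hindep
      have htails : ∀ a' b', D a' b' → proj a' b' u' = proj a' b' (p ++ q) := by
        intro a' b' hab
        have h1 : proj a' b' (a :: u') = proj a' b' (a :: (p ++ q)) :=
          (h a' b' hab).trans (proj_eq_of_rel hrefl hsymm hbub a' b' hab)
        by_cases hca : a = a' ∨ a = b'
        · simpa [proj, List.filter_cons, hca] using h1
        · simpa [proj, List.filter_cons, hca] using h1
      have := ih (p ++ q) htails
      exact (TraceRel.append_left [a] this).trans hbub.symm

theorem rel_cancel (hrefl : ∀ a, D a a) (hsymm : ∀ a b, D a b → D b a)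
    {l v w : List A} (h : TraceRel D (l ++ v) (l ++ w)) : TraceRel D v w := by
  apply rel_of_proj_eq hrefl hsymm
  intro a b hab
  have := proj_eq_of_rel hrefl hsymm h a b hab
  simp only [proj, List.filter_append] at this
  exact List.append_cancel_left this

end Cancel

end MazTrace

open MazTrace in
/-- Trace concatenation is left-cancellative: if `uv = uw` then `v = w`. -/
theorem trace_mul_left_cancel {A : Type*} [Finite A] (D : A → A → Prop)
    (hrefl : ∀ a, D a a) (hsymm : ∀ a b, D a b → D b a)
    (u v w : Trace D) (h : u * v = u * w) : v = w := by
  induction u using Quotient.ind with | _ lu =>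
  induction v using Quotient.ind with | _ lv =>
  induction w using Quotient.ind with | _ lw =>
  exact Quotient.sound (rel_cancel hrefl hsymm (Quotient.exact h))
end

section
/- The prefix order on traces is left-cancellative: for all Mazurkiewicz traces u, v, w over a dependency alphabet, if uv ⊑ uw then v ⊑ w. -/
namespace MazTrace

variable {A : Type*} {D : A → A → Prop}

/-- One elementary swap step. -/
def Step (D : A → A → Prop) (u v : List A) : Prop :=
  ∃ (p q : List A) (a b : A), ¬ D a b ∧ u = p ++ a :: b :: q ∧ v = p ++ b :: a :: q

lemma Step.symm' (hsymm : ∀ a b, D a b → D b a) {u v : List A} (h : Step D u v) :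
    Step D v u := by
  obtain ⟨p, q, a, b, hab, hu, hv⟩ := h
  exact ⟨p, q, b, a, fun h => hab (hsymm _ _ h), hv, hu⟩

lemma traceRel_to_rtg (hsymm : ∀ a b, D a b → D b a) {u v : List A}
    (h : TraceRel D u v) : Relation.ReflTransGen (Step D) u v := by
  induction h with
  | refl u => exact .refl
  | swap x y a b hab => exact .single ⟨x, y, a, b, hab, rfl, rfl⟩
  | symm _ ih =>
      haveI : Std.Symm (Step D) := ⟨fun _ _ h => Step.symm' hsymm h⟩
      exact Std.Symm.symm (r := Relation.ReflTransGen (Step D)) _ _ ih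
  | trans _ _ ih1 ih2 => exact ih1.trans ih2

lemma firstOcc (hsymm : ∀ a b, D a b → D b a) {a : A} {u v : List A}
    (h : Relation.ReflTransGen (Step D) (a :: u) v) :
    ∃ p q, v = p ++ a :: q ∧ (∀ c ∈ p, ¬ D a c) ∧ TraceRel D u (p ++ q) := by
  induction h with
  | refl => exact ⟨[], u, rfl, by simp, .refl u⟩
  | tail _ hstep ih =>
    obtain ⟨p, q, rfl, hind, hrel⟩ := ih
    obtain ⟨x, y, c, d, hcd, heq, rfl⟩ := hstep
    rcases List.append_eq_append_iff.mp heq with ⟨r, hx, hq⟩ | ⟨r, hp, hq⟩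
    · -- x = p ++ r, a :: q = r ++ c :: d :: y
      rcases r with _ | ⟨e, r'⟩
      · -- r = [] : x = p, a = c, q = d :: y
        simp only [List.nil_append] at hq
        obtain ⟨rfl, rfl⟩ : a = c ∧ q = d :: y := by
          constructor <;> [exact (List.cons.injEq _ _ _ _ ▸ hq).1;
            exact (List.cons.injEq _ _ _ _ ▸ hq).2]
        subst hx
        refine ⟨p ++ [d], y, by simp, ?_, by simpa using hrel⟩
        intro c hc
        rcases List.mem_append.mp hc with hc | hc
        · exact hind c hc
        · simp at hc; subst hc; exact hcd
      · -- r = e :: r' : a = e, q = r' ++ c :: d :: y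
        simp only [List.cons_append] at hq
        obtain ⟨rfl, rfl⟩ : a = e ∧ q = r' ++ c :: d :: y := by
          constructor <;> [exact (List.cons.injEq _ _ _ _ ▸ hq).1;
            exact (List.cons.injEq _ _ _ _ ▸ hq).2]
        subst hx
        refine ⟨p, r' ++ d :: c :: y, by simp, hind, ?_⟩
        have hsw := TraceRel.swap (D := D) (p ++ r') y c d hcd
        refine hrel.trans ?_
        simpa [List.append_assoc] using hsw
    · -- p = x ++ r, c :: d :: y = r ++ a :: q
      rcases r with _ | ⟨e, r'⟩
      · -- r = [] : c = a, d :: y = q, p = x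
        simp only [List.nil_append] at hq
        obtain ⟨rfl, rfl⟩ : c = a ∧ d :: y = q := by
          constructor <;> [exact (List.cons.injEq _ _ _ _ ▸ hq).1;
            exact (List.cons.injEq _ _ _ _ ▸ hq).2]
        simp only [List.append_nil] at hp; subst hp
        refine ⟨p ++ [d], y, by simp, ?_, by simpa using hrel⟩
        intro c hc
        rcases List.mem_append.mp hc with hc | hc
        · exact hind c hc
        · simp at hc; subst hc; exact hcd
      · rcases r' with _ | ⟨f, r''⟩
        · -- r = [e] : c = e, d = a, y = q, p = x ++ [c]
          simp only [List.cons_append, List.nil_append] at hq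
          injection hq with h1 hq2
          injection hq2 with h2 h3
          subst h1; subst h2; subst h3; subst hp
          refine ⟨x, c :: y, by simp, ?_, by simpa using hrel⟩
          intro c' hc'
          exact hind c' (by simp [hc'])
        · -- r = e :: f :: r'' : c = e, d = f, y = r'' ++ a :: q, p = x ++ c :: d :: r''
          simp only [List.cons_append] at hq
          obtain ⟨rfl, hq2⟩ : c = e ∧ d :: y = f :: (r'' ++ a :: q) := by
            constructor <;> [exact (List.cons.injEq _ _ _ _ ▸ hq).1;
              exact (List.cons.injEq _ _ _ _ ▸ hq).2]
          obtain ⟨rfl, rfl⟩ : d = f ∧ y = r'' ++ a :: q := by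
            constructor <;> [exact (List.cons.injEq _ _ _ _ ▸ hq2).1;
              exact (List.cons.injEq _ _ _ _ ▸ hq2).2]
          subst hp
          refine ⟨x ++ d :: c :: r'', q, by simp, ?_, ?_⟩
          · intro c' hc'
            refine hind c' ?_
            simp only [List.mem_append, List.mem_cons] at hc' ⊢
            tauto
          · have hsw := TraceRel.swap (D := D) x (r'' ++ q) c d hcd
            refine hrel.trans ?_
            simpa [List.append_assoc] using hsw

lemma cancel_cons (hrefl : ∀ a, D a a) (hsymm : ∀ a b, D a b → D b a)
    {a : A} {s t : List A} (h : TraceRel D (a :: s) (a :: t)) : TraceRel D s t := by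
  obtain ⟨p, q, heq, hind, hrel⟩ := firstOcc hsymm (traceRel_to_rtg hsymm h)
  rcases p with _ | ⟨c, p'⟩
  · simp only [List.nil_append] at heq
    obtain rfl : t = q := (List.cons.injEq _ _ _ _ ▸ heq).2
    simpa using hrel
  · obtain rfl : a = c := (List.cons.injEq _ _ _ _ ▸ heq).1
    exact absurd (hrefl a) (hind a (by simp))

lemma cancel_append (hrefl : ∀ a, D a a) (hsymm : ∀ a b, D a b → D b a)
    {s t : List A} : ∀ u : List A, TraceRel D (u ++ s) (u ++ t) → TraceRel D s t := by
  intro u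
  induction u with
  | nil => intro h; simpa using h
  | cons a u ih => intro h; exact ih (cancel_cons hrefl hsymm h)

lemma Trace.mul_mk (u v : List A) :
    mk D u * mk D v = mk D (u ++ v) := rfl

lemma Trace.mul_assoc' (s t r : Trace D) : s * t * r = s * (t * r) := by
  induction s using Quotient.inductionOn
  induction t using Quotient.inductionOn
  induction r using Quotient.inductionOn
  exact congrArg (Trace.mk D) (List.append_assoc _ _ _)

lemma Trace.mul_left_cancel (hrefl : ∀ a, D a a) (hsymm : ∀ a b, D a b → D b a)
    {u s t : Trace D} (h : u * s = u * t) : s = t := by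
  obtain ⟨ul⟩ := u
  obtain ⟨sl⟩ := s
  obtain ⟨tl⟩ := t
  exact Quotient.sound (cancel_append hrefl hsymm ul (Quotient.exact h))

end MazTrace

open MazTrace in
/-- The prefix order on traces is left-cancellative: if `uv ⊑ uw` then `v ⊑ w`. -/
theorem trace_prefix_left_cancel {A : Type*} [Finite A] (D : A → A → Prop)
    (hrefl : ∀ a, D a a) (hsymm : ∀ a b, D a b → D b a)
    (u v w : Trace D) (h : (u * v).Prefix (u * w)) : v.Prefix w := by
  obtain ⟨x, hx⟩ := h
  rw [Trace.mul_assoc'] at hx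
  exact ⟨x, Trace.mul_left_cancel hrefl hsymm hx⟩
end

section
/- Let B ⊆ A, let a ∈ A, and let u, v be traces over a dependency alphabet such that the trace ua is prime. Then av is B-prime if and only if uav is B-prime. -/
namespace BPrimeAux

open MazTrace

variable {A : Type*} {D : A → A → Prop}

theorem traceRel_perm {u v : List A} (h : TraceRel D u v) : u.Perm v := by
  induction h with
  | refl u => exact .refl u
  | swap x y a b hab => exact List.Perm.append_left x (List.Perm.swap b a y)
  | symm _ ih => exact ih.symm
  | trans _ _ ih₁ ih₂ => exact ih₁.trans ih₂

theorem traceRel_filter (p : A → Bool) (hp : ∀ x y, p x = true → p y = true → D x y)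
    {u v : List A} (h : TraceRel D u v) : u.filter p = v.filter p := by
  induction h with
  | refl u => rfl
  | swap x y a b hab =>
      simp only [List.filter_append, List.filter_cons]
      cases hpa : p a <;> cases hpb : p b <;> simp [hpa, hpb]
      exact absurd (hp a b hpa hpb) hab
  | symm _ ih => exact ih.symm
  | trans _ _ ih₁ ih₂ => exact ih₁.trans ih₂

theorem shift (c : A) :
    ∀ y : List A, (∀ b ∈ y, ¬ D c b) → TraceRel D (c :: y) (y ++ [c])
  | [], _ => .refl _
  | b :: y, h => by
      have h1 : TraceRel D (c :: b :: y) (b :: c :: y) := by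
        simpa using TraceRel.swap (D := D) [] y c b (h b List.mem_cons_self)
      have h2 := (shift c y (fun b' hb' => h b' (List.mem_cons_of_mem _ hb'))).append_left [b]
      exact h1.trans (by simpa using h2)

theorem exists_last_occ {c : A} {l : List A} (hl : c ∈ l) :
    ∃ x y, l = x ++ c :: y ∧ c ∉ y := by
  induction l with
  | nil => cases hl
  | cons d l ih =>
    by_cases hc : c ∈ l
    · obtain ⟨x, y, rfl, hy⟩ := ih hc
      exact ⟨d :: x, y, rfl, hy⟩
    · have hcd : c = d := by
        rcases List.mem_cons.1 hl with h | h
        · exact h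
        · exact absurd h hc
      exact ⟨[], l, by simp [hcd], hc⟩

theorem getLast?_filter_eq {p : A → Bool} {l : List A} {b : A} (hb : b ∈ l) (hpb : p b = true)
    (hall : ∀ z ∈ l, p z = true → z = b) : (l.filter p).getLast? = some b := by
  have hbmem : b ∈ l.filter p := List.mem_filter.2 ⟨hb, hpb⟩
  cases hl : (l.filter p).getLast? with
  | none =>
    rw [List.getLast?_eq_none_iff] at hl
    rw [hl] at hbmem
    cases hbmem
  | some d =>
    have hd : d ∈ l.filter p := by
      obtain ⟨ys, hys⟩ := List.getLast?_eq_some_iff.1 hl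
      rw [hys]; simp
    rw [hall d (List.mem_filter.1 hd).1 (List.mem_filter.1 hd).2]

theorem key (hrefl : ∀ a, D a a) (hsymm : ∀ a b, D a b → D b a)
    {c a : A} {p q x : List A}
    (hprime : Trace.IsPrime (Trace.mk D (p ++ [a])))
    (h : TraceRel D (x ++ [c]) (p ++ a :: q)) :
    ∃ y, TraceRel D (y ++ [c]) (a :: q) := by
  classical
  have hfil : ∀ b : A, D c b →
      ((p ++ a :: q).filter (fun z => decide (z = b ∨ z = c))).getLast? = some c := by
    intro b hb
    have hp : ∀ s t : A, decide (s = b ∨ s = c) = true → decide (t = b ∨ t = c) = true → D s t := by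
      intro s t hs ht
      rcases of_decide_eq_true hs with rfl | rfl <;> rcases of_decide_eq_true ht with rfl | rfl
      · exact hrefl _
      · exact hsymm _ _ hb
      · exact hb
      · exact hrefl _
    rw [← traceRel_filter _ hp h, List.filter_append]
    have h1 : List.filter (fun z => decide (z = b ∨ z = c)) [c] = [c] := by simp
    rw [h1, List.getLast?_concat]
  have contra : ∀ (w₁ r : List A) (b : A), D c b → b ∈ r → c ∉ r →
      p ++ a :: q = w₁ ++ r → False := by
    intro w₁ r b hb hbr hcr heq
    have h1 := hfil b hb
    rw [heq, List.filter_append] at h1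
    have h2 : (r.filter (fun z => decide (z = b ∨ z = c))).getLast? = some b := by
      refine getLast?_filter_eq hbr (by simp) ?_
      intro z hz hpz
      rcases of_decide_eq_true hpz with rfl | rfl
      · rfl
      · exact absurd hz hcr
    have hne : r.filter (fun z => decide (z = b ∨ z = c)) ≠ [] := by
      intro h0; rw [h0] at h2; cases h2
    rw [List.getLast?_append_of_ne_nil _ hne, h2] at h1
    exact hcr ((Option.some.inj h1) ▸ hbr)
  by_cases hcq : c ∈ a :: q
  · obtain ⟨x₁, y₁, heq, hy₁⟩ := exists_last_occ hcq
    have hind : ∀ b ∈ y₁, ¬ D c b := by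
      intro b hby hDb
      exact contra (p ++ x₁ ++ [c]) y₁ b hDb hby hy₁ (by rw [heq]; simp)
    refine ⟨x₁ ++ y₁, ?_⟩
    rw [heq]
    have h2 := ((shift c y₁ hind).append_left x₁).symm
    simpa [List.append_assoc] using h2
  · have hcp : c ∈ p := by
      have hmem : c ∈ p ++ a :: q := (traceRel_perm h).mem_iff.1 (by simp)
      rcases List.mem_append.1 hmem with h' | h'
      · exact h'
      · exact absurd h' hcq
    have hind1 : ∀ b ∈ a :: q, ¬ D c b := fun b hb hDb => contra p (a :: q) b hDb hb hcq rfl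
    obtain ⟨x₁, y₁, heqp, hy₁⟩ := exists_last_occ hcp
    have hind2 : ∀ b ∈ y₁, ¬ D c b := by
      intro b hby hDb
      refine contra (x₁ ++ [c]) (y₁ ++ a :: q) b hDb (by simp [hby]) ?_ (by rw [heqp]; simp)
      intro hc'
      rcases List.mem_append.1 hc' with h' | h'
      · exact hy₁ h'
      · exact hcq h'
    exfalso
    have h3 : TraceRel D p (x₁ ++ (y₁ ++ [c])) := heqp ▸ ((shift c y₁ hind2).append_left x₁)
    have hswap : TraceRel D ((x₁ ++ (y₁ ++ [c])) ++ [a]) ((x₁ ++ y₁ ++ [a]) ++ [c]) := by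
      have hs := TraceRel.swap (D := D) (x₁ ++ y₁) [] c a (hind1 a List.mem_cons_self)
      simpa [List.append_assoc] using hs
    have h5 := (h3.append_right [a]).trans hswap
    have hlast := hprime (p ++ [a]) ((x₁ ++ y₁ ++ [a]) ++ [c]) rfl (Quotient.sound h5.symm)
    rw [List.getLast?_concat, List.getLast?_concat] at hlast
    have hac : a = c := Option.some.inj hlast
    exact hcq (by rw [← hac]; exact List.mem_cons_self)

end BPrimeAux

open MazTrace in
/-- If the trace `ua` is prime, then `av` is `B`-prime iff `uav` is `B`-prime. -/
theorem bprime_cons_iff_of_prime {A : Type*} [Finite A] (D : A → A → Prop)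
    (hrefl : ∀ a, D a a) (hsymm : ∀ a b, D a b → D b a)
    (B : Set A) (a : A) (u v : Trace D)
    (hua : (u * Trace.mk D [a]).IsPrime) :
    (Trace.mk D [a] * v).IsBPrime B ↔ (u * Trace.mk D [a] * v).IsBPrime B := by
  obtain ⟨p, rfl⟩ := Quotient.exists_rep u
  obtain ⟨q, rfl⟩ := Quotient.exists_rep v
  have hassoc : Trace.mk D p * Trace.mk D [a] * Trace.mk D q = Trace.mk D (p ++ a :: q) := by
    show Trace.mk D ((p ++ [a]) ++ q) = Trace.mk D (p ++ a :: q)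
    exact congrArg (Trace.mk D) (by simp)
  constructor
  · intro hb w hw c hc
    obtain ⟨x, rfl⟩ := List.getLast?_eq_some_iff.1 hc
    have hrel : TraceRel D (x ++ [c]) (p ++ a :: q) := Quotient.exact (hw.trans hassoc)
    obtain ⟨y, hy⟩ := BPrimeAux.key hrefl hsymm hua hrel
    exact hb (y ++ [c]) (Quotient.sound hy) c List.getLast?_concat
  · intro hb w hw c hc
    have wne : w ≠ [] := by intro h0; rw [h0] at hc; cases hc
    have h1 : Trace.mk D (p ++ w) = Trace.mk D p * Trace.mk D [a] * Trace.mk D q := by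
      have h2 : Trace.mk D (p ++ w) = Trace.mk D p * Trace.mk D w := rfl
      rw [h2, hw, hassoc]
      show Trace.mk D (p ++ a :: q) = _
      rfl
    refine hb (p ++ w) h1 c ?_
    rw [List.getLast?_append_of_ne_nil _ wne]
    exact hc
end

section
/- For every subset B ⊆ A and all traces u, v over a dependency alphabet: u ⊑ view_B(uv) if and only if view_B(uv) = u·view_B(v). -/
namespace MazTrace
namespace ViewAux

variable {A : Type*}

open Classical in
/-- The canonical representative of the `B`-view: keep a letter iff it depends
on `B` or on a kept letter to its right. -/
noncomputable def core (D : A → A → Prop) (B : Set A) : List A → List A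
  | [] => []
  | x :: xs =>
      if (∃ b ∈ B, D x b) ∨ (∃ y ∈ core D B xs, D x y) then x :: core D B xs
      else core D B xs

variable {D : A → A → Prop} {B : Set A}

open Classical in
theorem core_cons (x : A) (xs : List A) :
    core D B (x :: xs) =
      if (∃ b ∈ B, D x b) ∨ (∃ y ∈ core D B xs, D x y) then x :: core D B xs
      else core D B xs := by
  rw [core]

theorem cond_iff {a b : A} (hnab : ¬ D a b) (l : List A) :
    ((∃ b' ∈ B, D a b') ∨ ∃ y ∈ b :: l, D a y) ↔
      ((∃ b' ∈ B, D a b') ∨ ∃ y ∈ l, D a y) := by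
  simp only [List.mem_cons]
  constructor
  · rintro (h | ⟨y, (rfl | hy), hd⟩)
    exacts [Or.inl h, absurd hd hnab, Or.inr ⟨y, hy, hd⟩]
  · rintro (h | ⟨y, hy, hd⟩)
    exacts [Or.inl h, Or.inr ⟨y, Or.inr hy, hd⟩]

theorem perm_of_traceRel {u v : List A} (h : TraceRel D u v) : u.Perm v := by
  induction h with
  | refl u => exact .refl u
  | swap p s a b _ => exact (List.Perm.swap b a s).append_left p
  | symm _ ih => exact ih.symm
  | trans _ _ ih1 ih2 => exact ih1.trans ih2

theorem core_indep {q : List A} (h : ∀ x ∈ q, ∀ b ∈ B, ¬ D x b) :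
    core D B q = [] := by
  induction q with
  | nil => rfl
  | cons x xs ih =>
    have ih' := ih (fun y hy => h y (List.mem_cons_of_mem _ hy))
    rw [core_cons, ih', if_neg]
    rintro (⟨b, hb, hd⟩ | ⟨y, hy, _⟩)
    · exact h x List.mem_cons_self b hb hd
    · simp at hy

theorem core_append (p q : List A) :
    ∃ k, core D B (p ++ q) = k ++ core D B q ∧ k.Sublist p := by
  induction p with
  | nil => exact ⟨[], rfl, List.nil_sublist _⟩
  | cons x p ih =>
    obtain ⟨k, hk, hs⟩ := ih
    by_cases h : (∃ b ∈ B, D x b) ∨ (∃ y ∈ core D B (p ++ q), D x y)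
    · exact ⟨x :: k, by rw [List.cons_append, core_cons, if_pos h, hk, List.cons_append],
        hs.cons₂ x⟩
    · exact ⟨k, by rw [List.cons_append, core_cons, if_neg h, hk], hs.cons x⟩

theorem core_traceRel (hsymm : ∀ a b, D a b → D b a) {u v : List A}
    (h : TraceRel D u v) :
    TraceRel D (core D B u) (core D B v) ∧
      ∀ c, c ∈ core D B u ↔ c ∈ core D B v := by
  induction h with
  | refl u => exact ⟨.refl _, fun _ => Iff.rfl⟩
  | symm _ ih => exact ⟨ih.1.symm, fun c => (ih.2 c).symm⟩
  | trans _ _ ih1 ih2 => exact ⟨ih1.1.trans ih2.1, fun c => (ih1.2 c).trans (ih2.2 c)⟩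
  | swap p s a b hab =>
    have hba : ¬ D b a := fun hd => hab (hsymm _ _ hd)
    induction p with
    | nil =>
      simp only [List.nil_append]
      by_cases hKa : (∃ b' ∈ B, D a b') ∨ (∃ y ∈ core D B s, D a y) <;>
      by_cases hKb : (∃ b' ∈ B, D b b') ∨ (∃ y ∈ core D B s, D b y)
      · have e1 : core D B (a :: b :: s) = a :: b :: core D B s := by
          rw [core_cons a (b :: s), core_cons b s, if_pos hKb,
            if_pos ((cond_iff hab (core D B s)).mpr hKa)]
        have e2 : core D B (b :: a :: s) = b :: a :: core D B s := by
          rw [core_cons b (a :: s), core_cons a s, if_pos hKa,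
            if_pos ((cond_iff hba (core D B s)).mpr hKb)]
        rw [e1, e2]
        refine ⟨by simpa using TraceRel.swap [] (core D B s) a b hab, fun c => ?_⟩
        simp only [List.mem_cons]
        tauto
      · have e1 : core D B (a :: b :: s) = a :: core D B s := by
          rw [core_cons a (b :: s), core_cons b s, if_neg hKb, if_pos hKa]
        have e2 : core D B (b :: a :: s) = a :: core D B s := by
          rw [core_cons b (a :: s), core_cons a s, if_pos hKa,
            if_neg (fun h => hKb ((cond_iff hba (core D B s)).mp h))]
        rw [e1, e2]
        exact ⟨.refl _, fun _ => Iff.rfl⟩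
      · have e1 : core D B (a :: b :: s) = b :: core D B s := by
          rw [core_cons a (b :: s), core_cons b s, if_pos hKb,
            if_neg (fun h => hKa ((cond_iff hab (core D B s)).mp h))]
        have e2 : core D B (b :: a :: s) = b :: core D B s := by
          rw [core_cons b (a :: s), core_cons a s, if_neg hKa, if_pos hKb]
        rw [e1, e2]
        exact ⟨.refl _, fun _ => Iff.rfl⟩
      · have e1 : core D B (a :: b :: s) = core D B s := by
          rw [core_cons a (b :: s), core_cons b s, if_neg hKb, if_neg hKa]
        have e2 : core D B (b :: a :: s) = core D B s := by
          rw [core_cons b (a :: s), core_cons a s, if_neg hKa, if_neg hKb]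
        rw [e1, e2]
        exact ⟨.refl _, fun _ => Iff.rfl⟩
    | cons x p ihp =>
      obtain ⟨ih1, ih2⟩ := ihp
      simp only [List.cons_append] at *
      constructor
      · by_cases h : (∃ b' ∈ B, D x b') ∨ (∃ y ∈ core D B (p ++ a :: b :: s), D x y)
        · rw [core_cons, if_pos h, core_cons, if_pos]
          · exact (ih1.append_left [x] : _)
          · rcases h with h' | ⟨y, hy, hd⟩
            · exact Or.inl h'
            · exact Or.inr ⟨y, (ih2 y).mp hy, hd⟩
        · rw [core_cons, if_neg h, core_cons, if_neg]
          · exact ih1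
          · rintro (h' | ⟨y, hy, hd⟩)
            · exact h (Or.inl h')
            · exact h (Or.inr ⟨y, (ih2 y).mpr hy, hd⟩)
      · intro c
        by_cases h : (∃ b' ∈ B, D x b') ∨ (∃ y ∈ core D B (p ++ a :: b :: s), D x y)
        · rw [core_cons, if_pos h, core_cons, if_pos]
          · simp only [List.mem_cons]
            exact or_congr Iff.rfl (ih2 c)
          · rcases h with h' | ⟨y, hy, hd⟩
            · exact Or.inl h'
            · exact Or.inr ⟨y, (ih2 y).mp hy, hd⟩
        · rw [core_cons, if_neg h, core_cons, if_neg]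
          · exact ih2 c
          · rintro (h' | ⟨y, hy, hd⟩)
            · exact h (Or.inl h')
            · exact h (Or.inr ⟨y, (ih2 y).mpr hy, hd⟩)

theorem commute_head {x : A} (m r : List A) :
    (∀ y ∈ m, ¬ D x y) → TraceRel D (x :: (m ++ r)) (m ++ x :: r) := by
  induction m with
  | nil => exact fun _ => .refl _
  | cons y m ih =>
    intro h
    have h1 : TraceRel D (x :: y :: (m ++ r)) (y :: x :: (m ++ r)) := by
      simpa using TraceRel.swap [] (m ++ r) x y (h y (by simp))
    refine h1.trans ?_
    simpa using (ih (fun z hz => h z (by simp [hz]))).append_left [y]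

theorem exists_drop (u : List A) :
    ∃ d, TraceRel D u (core D B u ++ d) ∧ ∀ x ∈ d, ∀ b ∈ B, ¬ D x b := by
  induction u with
  | nil => exact ⟨[], .refl _, by simp⟩
  | cons x xs ih =>
    obtain ⟨d, hd, hdI⟩ := ih
    by_cases h : (∃ b ∈ B, D x b) ∨ (∃ y ∈ core D B xs, D x y)
    · refine ⟨d, ?_, hdI⟩
      rw [core_cons, if_pos h, List.cons_append]
      exact (hd.append_left [x] : _)
    · push_neg at h
      refine ⟨x :: d, ?_, ?_⟩
      · rw [core_cons, if_neg (by push_neg; exact h)]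
        have h1 : TraceRel D (x :: xs) (x :: (core D B xs ++ d)) :=
          (hd.append_left [x] : _)
        exact h1.trans (commute_head _ _ (fun y hy => h.2 y hy))
      · intro z hz
        rcases List.mem_cons.mp hz with rfl | hz'
        · exact h.1
        · exact hdI z hz' 

theorem count_core_append [DecidableEq A] {x : A} {q : List A}
    (hx : x ∈ core D B q) (hxx : D x x) (p : List A) :
    List.count x (core D B (p ++ q)) = List.count x p + List.count x (core D B q) := by
  induction p with
  | nil => simp
  | cons y p ih =>
    rw [List.cons_append, core_cons]
    by_cases h : (∃ b ∈ B, D y b) ∨ (∃ z ∈ core D B (p ++ q), D y z)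
    · rw [if_pos h, List.count_cons, List.count_cons, ih]
      ring
    · have hmem : x ∈ core D B (p ++ q) := by
        have h0 : 0 < List.count x (core D B q) := List.count_pos_iff.mpr hx
        have : 0 < List.count x (core D B (p ++ q)) := by rw [ih]; omega
        exact List.count_pos_iff.mp this
      have hyx : y ≠ x := fun he => h (Or.inr ⟨x, hmem, he ▸ hxx⟩)
      rw [if_neg h, ih]
      simp [List.count_cons, Ne.symm hyx, hyx]

theorem isView_core (hsymm : ∀ a b, D a b → D b a) (c : List A) :
    Trace.IsView B (Trace.mk D c) (Trace.mk D (core D B c)) := by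
  constructor
  · obtain ⟨d, hd, hdI⟩ := exists_drop (D := D) (B := B) c
    refine ⟨Trace.mk D d, Quotient.sound hd.symm, ?_⟩
    intro a ha b hb
    exact hdI a ha b hb
  · intro w' v' hw hv
    induction w' using Quotient.inductionOn with | _ w => ?_
    induction v' using Quotient.inductionOn with | _ r => ?_
    have hrel : TraceRel D (w ++ r) c := Quotient.exact hw
    have hcr : core D B r = [] := core_indep (fun x hx b hb => hv x hx b hb)
    obtain ⟨k, hk, hks⟩ := core_append (D := D) (B := B) w r
    rw [hcr, List.append_nil] at hk
    have hcc := (core_traceRel (B := B) hsymm hrel).1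
    have hlen : (core D B (w ++ r)).length = (core D B c).length :=
      (perm_of_traceRel hcc).length_eq
    show (core D B c).length ≤ w.length
    rw [← hlen, hk]
    exact hks.length_le

theorem view_mk (hsymm : ∀ a b, D a b → D b a) (c : List A) :
    Trace.view B (Trace.mk D c) = Trace.mk D (core D B c) := by
  have hW : Trace.IsView B (Trace.mk D c) (Trace.view B (Trace.mk D c)) :=
    Classical.epsilon_spec ⟨_, isView_core hsymm c⟩
  obtain ⟨w, hw⟩ := Quotient.exists_rep (Trace.view B (Trace.mk D c))
  rw [← hw] at hW ⊢
  obtain ⟨⟨r, hr, hrI⟩, hmin⟩ := hW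
  obtain ⟨r', hr'⟩ := Quotient.exists_rep r
  rw [← hr'] at hr hrI
  have hrel : TraceRel D (w ++ r') c := Quotient.exact hr
  have hcr : core D B r' = [] := core_indep (fun x hx b hb => hrI x hx b hb)
  obtain ⟨k, hk, hks⟩ := core_append (D := D) (B := B) w r'
  rw [hcr, List.append_nil] at hk
  have hcc : TraceRel D (core D B (w ++ r')) (core D B c) :=
    (core_traceRel (B := B) hsymm hrel).1
  have h1 : k.length = (core D B c).length := by
    rw [← hk]
    exact (perm_of_traceRel hcc).length_eq
  have h2 : w.length ≤ (core D B c).length := by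
    obtain ⟨d, hd, hdI⟩ := exists_drop (D := D) (B := B) c
    exact hmin (Trace.mk D (core D B c)) (Trace.mk D d) (Quotient.sound hd.symm)
      (fun a ha b hb => hdI a ha b hb)
  have hkw : k = w := hks.eq_of_length (le_antisymm hks.length_le (by omega))
  calc Trace.mk D w = Trace.mk D (core D B (w ++ r')) := by
        rw [hk, hkw]
    (Trace.mk D (core D B (w ++ r')) : Trace D) = Trace.mk D (core D B c) := by
        exact Quotient.sound hcc

end ViewAux
end MazTrace


open MazTrace in
/-- `u ⊑ view_B(uv)` iff `view_B(uv) = u · view_B(v)`. -/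
theorem prefix_view_iff {A : Type*} [Finite A] (D : A → A → Prop)
    (hrefl : ∀ a, D a a) (hsymm : ∀ a b, D a b → D b a)
    (B : Set A) (u v : Trace D) :
    u.Prefix (Trace.view B (u * v)) ↔ Trace.view B (u * v) = u * Trace.view B v := by
  classical
  induction u using Quotient.inductionOn with | _ a => ?_
  induction v using Quotient.inductionOn with | _ b => ?_
  show (Trace.mk D a).Prefix (Trace.view B (Trace.mk D (a ++ b))) ↔
    Trace.view B (Trace.mk D (a ++ b)) = Trace.mk D a * Trace.view B (Trace.mk D b)
  rw [ViewAux.view_mk (B := B) hsymm, ViewAux.view_mk (B := B) hsymm]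
  obtain ⟨k, hk, hks⟩ := ViewAux.core_append (D := D) (B := B) a b
  constructor
  · rintro ⟨w, hw⟩
    obtain ⟨w', hw'⟩ := Quotient.exists_rep w
    rw [← hw'] at hw
    have hrel : TraceRel D (a ++ w') (ViewAux.core D B (a ++ b)) := Quotient.exact hw
    rw [hk] at hrel
    have hcnt := (ViewAux.perm_of_traceRel hrel).count_eq
    have hka : k = a := by
      have hcnt' : ∀ x, List.count x k = List.count x a := by
        intro x
        by_contra hne
        have hlt : List.count x k < List.count x a :=
          lt_of_le_of_ne (hks.count_le x) hne
        have hx : x ∈ MazTrace.ViewAux.core D B b := by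
          have h3 := hcnt x
          simp only [List.count_append] at h3
          have : 0 < List.count x (MazTrace.ViewAux.core D B b) := by omega
          exact List.count_pos_iff.mp this
        have h6 := ViewAux.count_core_append (B := B) hx (hrefl x) a
        rw [hk, List.count_append] at h6
        omega
      exact hks.eq_of_length (List.Perm.length_eq (List.perm_iff_count.mpr hcnt'))
    rw [hk, hka]
    rfl
  · intro h
    exact ⟨Trace.mk D (MazTrace.ViewAux.core D B b), h.symm⟩
end
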